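/- (Existence part of the extremal problem, Theorem 7.) Let 0 < r < 1 and r < s, t < 1/r. Set λ = (log t − log r)/(log s − log r) and μ = (log t + log r)/(log s + log r), and let K = max{λ, 1/λ, μ, 1/μ}. Then there exists a homeomorphism f of the closed annulus {z ∈ ℂ : r ≤ |z| ≤ 1/r} onto itself such that: f(z) = z whenever |z| = r or |z| = 1/r; |f(z)| = t whenever |z| = s; f is real-differentiable at every z with |z| ∉ {r, s, 1/r}; and at every such point ‖Df(z)‖² ≤ K · J(z,f). (The map may be taken to be a scaled radial power stretch on each of the two subannuli {r ≤ |z| ≤ s} and {s ≤ |z| ≤ 1/r}.) -/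

import Mathlib

open Complex
set_option maxHeartbeats 1000000



noncomputable def Fm (c α : ℝ) (z : ℂ) : ℂ := (c * ‖z‖ ^ (α - 1)) • z

lemma Fm_abs (c α : ℝ) (hc : 0 ≤ c) (z : ℂ) (hz : z ≠ 0) :
    ‖Fm c α z‖ = c * ‖z‖ ^ α := by
  have hρ : 0 < ‖z‖ := norm_pos_iff.mpr hz
  unfold Fm
  rw [norm_smul, Real.norm_eq_abs]
  rw [_root_.abs_of_nonneg (by positivity : (0:ℝ) ≤ c * ‖z‖ ^ (α - 1))]
  rw [mul_assoc, ← Real.rpow_add_one hρ.ne']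
  norm_num

lemma Fm_comp (c c' α α' : ℝ) (hc' : 0 < c') (z : ℂ) (hz : z ≠ 0) :
    Fm c α (Fm c' α' z) = Fm (c * c' ^ α) (α * α') z := by
  have hρ : 0 < ‖z‖ := norm_pos_iff.mpr hz
  have h1 : ‖Fm c' α' z‖ = c' * ‖z‖ ^ α' := Fm_abs c' α' hc'.le z hz
  show (c * ‖Fm c' α' z‖ ^ (α - 1)) • Fm c' α' z = _
  rw [h1]
  unfold Fm
  rw [smul_smul]
  congr 1
  rw [Real.mul_rpow hc'.le (Real.rpow_nonneg hρ.le _), ← Real.rpow_mul hρ.le,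
    show c * (c' ^ (α-1) * ‖z‖ ^ (α' * (α-1))) * (c' * ‖z‖ ^ (α'-1))
      = c * (c' ^ (α-1) * c') * (‖z‖ ^ (α' * (α-1)) * ‖z‖ ^ (α'-1)) by ring,
    ← Real.rpow_add_one hc'.ne', ← Real.rpow_add hρ,
    show (α - 1 + 1 : ℝ) = α by ring, show (α' * (α-1) + (α'-1) : ℝ) = α * α' - 1 by ring]

lemma Fm_one (z : ℂ) : Fm 1 1 z = z := by
  simp [Fm]

lemma Fm_inv_left (c α : ℝ) (hc : 0 < c) (hα : α ≠ 0) (z : ℂ) (hz : z ≠ 0) :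
    Fm (c ^ (-(1/α))) (1/α) (Fm c α z) = z := by
  rw [Fm_comp _ c _ α hc z hz]
  have h1 : c ^ (-(1/α)) * c ^ (1/α) = 1 := by
    rw [← Real.rpow_add hc]; norm_num
  have h2 : (1/α) * α = 1 := by field_simp
  rw [h1, h2, Fm_one]

lemma Fm_inv_right (c α : ℝ) (hc : 0 < c) (hα : α ≠ 0) (w : ℂ) (hw : w ≠ 0) :
    Fm c α (Fm (c ^ (-(1/α))) (1/α) w) = w := by
  rw [Fm_comp c (c ^ (-(1/α))) α (1/α) (Real.rpow_pos_of_pos hc _) w hw]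
  have h1 : c * (c ^ (-(1/α))) ^ α = 1 := by
    rw [← Real.rpow_mul hc.le, show (-(1/α)) * α = -1 by field_simp,
      show c * c ^ (-1:ℝ) = c ^ (1:ℝ) * c ^ (-1:ℝ) by rw [Real.rpow_one],
      ← Real.rpow_add hc]
    norm_num
  have h2 : α * (1/α) = 1 := by field_simp
  rw [h1, h2, Fm_one]

lemma inv_scalar (c α x : ℝ) (hc : 0 < c) (hx : 0 < x) (hα : α ≠ 0) :
    c ^ (-(1/α)) * (c * x ^ α) ^ (1/α) = x := by
  rw [Real.mul_rpow hc.le (Real.rpow_nonneg hx.le _), ← Real.rpow_mul hx.le,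
    show α * (1/α) = 1 by field_simp, Real.rpow_one, ← mul_assoc, ← Real.rpow_add hc]
  norm_num

lemma Fm_contOn (c α : ℝ) : ContinuousOn (Fm c α) {z : ℂ | z ≠ 0} := by
  refine ContinuousOn.smul (f := fun z : ℂ => c * ‖z‖ ^ (α - 1)) (g := fun z => z) ?_ ?_
  · exact continuousOn_const.mul
      ((continuous_norm.continuousOn).rpow_const
        (fun x hx => Or.inl ((norm_pos_iff.mpr hx).ne')))
  · exact continuousOn_id




noncomputable def Dab (a b : ℝ) (z : ℂ) : ℂ →L[ℝ] ℂ :=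
  a • ContinuousLinearMap.id ℝ ℂ +
    (b • (z.re • Complex.reCLM + z.im • Complex.imCLM)).smulRight z

lemma Dab_apply (a b : ℝ) (z h : ℂ) :
    Dab a b z h = a • h + (b * (z.re * h.re + z.im * h.im)) • z := by
  simp [Dab, ContinuousLinearMap.smulRight_apply, smul_smul, mul_add]
  exact Or.inl (by ring)

lemma Dab_det (a b : ℝ) (z : ℂ) :
    LinearMap.det ((Dab a b z : ℂ →L[ℝ] ℂ) : ℂ →ₗ[ℝ] ℂ) = a * a + a * b * Complex.normSq z := by
  rw [← LinearMap.det_toMatrix Complex.basisOneI, Matrix.det_fin_two]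
  simp [LinearMap.toMatrix_apply, Complex.coe_basisOneI_repr, Complex.coe_basisOneI,
    Dab_apply, Complex.add_re, Complex.add_im, Complex.smul_re, Complex.smul_im,
    Complex.normSq_apply]
  ring

lemma Dab_norm_le (a b M : ℝ) (z : ℂ) (hM0 : 0 ≤ M)
    (h1 : |a| ≤ M) (h2 : |a + b * Complex.normSq z| ≤ M) :
    ‖Dab a b z‖ ≤ M := by
  apply ContinuousLinearMap.opNorm_le_bound _ hM0
  intro h
  have e1 : ∀ w : ℂ, ‖w‖ ^ 2 = w.re * w.re + w.im * w.im := fun w => by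
    rw [Complex.sq_norm, Complex.normSq_apply]
  have hre : (Dab a b z h).re = a * h.re + (b * (z.re * h.re + z.im * h.im)) * z.re := by
    simp [Dab_apply, Complex.smul_re]
  have him : (Dab a b z h).im = a * h.im + (b * (z.re * h.re + z.im * h.im)) * z.im := by
    simp [Dab_apply, Complex.smul_im]
  have hq : Complex.normSq z = z.re * z.re + z.im * z.im := Complex.normSq_apply z
  have hS : (0:ℝ) ≤ h.re * h.re + h.im * h.im :=
    add_nonneg (mul_self_nonneg _) (mul_self_nonneg _)
  have haM : a * a ≤ M * M := by nlinarith [abs_nonneg a, _root_.sq_abs a]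
  have key : ‖Dab a b z h‖ ^ 2 ≤ (M * ‖h‖) ^ 2 := by
    rw [e1, hre, him, mul_pow, e1 h]
    rcases le_or_gt (2 * a * b + b * b * Complex.normSq z) 0 with hc | hc
    · rw [hq] at hc
      nlinarith [sq_nonneg (z.re * h.re + z.im * h.im),
        mul_le_mul_of_nonneg_right haM hS,
        mul_nonpos_of_nonpos_of_nonneg hc (sq_nonneg (z.re * h.re + z.im * h.im))]
    · have hcs : (z.re * h.re + z.im * h.im) * (z.re * h.re + z.im * h.im)
          ≤ Complex.normSq z * (h.re * h.re + h.im * h.im) := by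
        rw [hq]; nlinarith [sq_nonneg (z.re * h.im - z.im * h.re)]
      have hM2 : (a + b * Complex.normSq z) * (a + b * Complex.normSq z) ≤ M * M := by
        nlinarith [abs_nonneg (a + b * Complex.normSq z), _root_.sq_abs (a + b * Complex.normSq z)]
      have h3 := mul_le_mul_of_nonneg_left hcs hc.le
      rw [hq] at h3 hM2
      nlinarith [mul_le_mul_of_nonneg_right hM2 hS]
  have h4 : (0:ℝ) ≤ M * ‖h‖ := mul_nonneg hM0 (norm_nonneg h)
  nlinarith [norm_nonneg (Dab a b z h)]

lemma Fm_hasFDerivAt (c α : ℝ) (z : ℂ) (hz : z ≠ 0) :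
    HasFDerivAt (Fm c α)
      (Dab (c * ‖z‖ ^ (α - 1)) (c * (α - 1) * ‖z‖ ^ (α - 3)) z) z := by
  have hq0 : Complex.normSq z ≠ 0 := by
    simpa using Complex.normSq_pos.mpr hz |>.ne'
  have e2 : ∀ γ : ℝ, ‖z‖ ^ γ = Complex.normSq z ^ (γ / 2) := fun γ => by
    rw [Complex.norm_def, Real.sqrt_eq_rpow, ← Real.rpow_mul (Complex.normSq_nonneg z),
      show (1/2 * γ : ℝ) = γ / 2 by ring]
  have heq : Fm c α = fun w => (c * Complex.normSq w ^ ((α-1) / 2)) • w := by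
    funext w
    unfold Fm
    congr 2
    rw [Complex.norm_def, Real.sqrt_eq_rpow, ← Real.rpow_mul (Complex.normSq_nonneg w),
      show (1/2 * (α-1) : ℝ) = (α-1) / 2 by ring]
  have hqd : HasFDerivAt (fun w : ℂ => Complex.normSq w)
      ((2 * z.re) • Complex.reCLM + (2 * z.im) • Complex.imCLM) z := by
    have h1 := (Complex.reCLM.hasFDerivAt (x := z)).mul (Complex.reCLM.hasFDerivAt (x := z))
    have h2 := (Complex.imCLM.hasFDerivAt (x := z)).mul (Complex.imCLM.hasFDerivAt (x := z))
    have h3 := h1.add h2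
    have : (fun w : ℂ => Complex.normSq w)
        = fun w : ℂ => Complex.reCLM w * Complex.reCLM w + Complex.imCLM w * Complex.imCLM w := by
      funext w; simp [Complex.normSq_apply]
    rw [this]
    refine h3.congr_fderiv ?_
    ext1 h
    simp [two_mul]
    ring
  have hφ := hqd.rpow_const (p := (α-1)/2) (Or.inl hq0)
  have hF := (hφ.const_mul c).smul (hasFDerivAt_id z)
  rw [heq]
  refine hF.congr_fderiv ?_
  ext1 h
  rw [Dab_apply]
  simp only [ContinuousLinearMap.add_apply, ContinuousLinearMap.smul_apply,
    ContinuousLinearMap.smulRight_apply, ContinuousLinearMap.id_apply,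
    ContinuousLinearMap.coe_smul', Pi.smul_apply, Complex.reCLM_apply, Complex.imCLM_apply,
    smul_eq_mul]
  rw [e2 (α-1), e2 (α-3)]
  have : ((α-1)/2 - 1 : ℝ) = (α-3)/2 := by ring
  rw [this]
  simp only [id_eq]
  congr 1
  ring

lemma Fm_deriv_bound (c α K : ℝ) (hc : 0 < c) (hα : 0 < α) (hK : max α (1/α) ≤ K)
    (z : ℂ) (hz : z ≠ 0) :
    ∃ D : ℂ →L[ℝ] ℂ, HasFDerivAt (Fm c α) D z ∧
      ‖D‖ ^ 2 ≤ K * LinearMap.det ((D : ℂ →L[ℝ] ℂ) : ℂ →ₗ[ℝ] ℂ) := by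
  have hρ : 0 < ‖z‖ := norm_pos_iff.mpr hz
  set ρ := ‖z‖ with hρdef
  set u := ρ ^ (α - 1) with hu
  have hu0 : 0 < u := Real.rpow_pos_of_pos hρ _
  set a := c * u with ha
  set b := c * (α - 1) * ρ ^ (α - 3) with hb
  have hqz : Complex.normSq z = ρ * ρ := by
    rw [← Complex.sq_norm]; ring
  have hbq : b * Complex.normSq z = c * (α - 1) * u := by
    rw [hqz, hb, hu]
    have : ρ ^ (α - 3) * (ρ * ρ) = ρ ^ (α - 1) := by
      rw [show ρ * ρ = ρ ^ ((2:ℕ):ℝ) by rw [Real.rpow_natCast]; ring,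
        ← Real.rpow_add hρ]
      congr 1
      ring
    rw [mul_assoc, this]
  refine ⟨Dab a b z, Fm_hasFDerivAt c α z hz, ?_⟩
  have hdet : LinearMap.det ((Dab a b z : ℂ →L[ℝ] ℂ) : ℂ →ₗ[ℝ] ℂ) = c * c * α * (u * u) := by
    rw [Dab_det, mul_assoc a b _, hbq, ha]
    ring
  set M := c * u * max 1 α with hM
  have hM0 : 0 ≤ M := by positivity
  have hnorm : ‖Dab a b z‖ ≤ M := by
    apply Dab_norm_le _ _ _ _ hM0
    · rw [abs_of_pos (by positivity : (0:ℝ) < a), ha, hM]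
      nlinarith [le_max_left (1:ℝ) α, hu0.le, hc.le]
    · rw [hbq]
      have : a + c * (α - 1) * u = c * α * u := by rw [ha]; ring
      rw [this, abs_of_pos (by positivity)]
      rw [hM]
      nlinarith [le_max_right (1:ℝ) α, hu0.le, hc.le]
  have hKα : max 1 α * max 1 α ≤ K * α := by
    rcases le_total α 1 with h | h
    · rw [max_eq_left h]
      have h1 : 1 / α ≤ K := le_trans (le_max_right _ _) hK
      have h2 : 1 ≤ K * α := by
        rw [div_le_iff₀ hα] at h1; linarith
      nlinarith
    · rw [max_eq_right h]
      have h1 : α ≤ K := le_trans (le_max_left _ _) hK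
      nlinarith
  calc ‖Dab a b z‖ ^ 2 ≤ M ^ 2 := by nlinarith [norm_nonneg (Dab a b z)]
    _ ≤ K * (c * c * α * (u * u)) := by
        rw [hM]
        nlinarith [mul_le_mul_of_nonneg_left hKα
          (mul_nonneg (mul_nonneg hc.le hc.le) (mul_nonneg hu0.le hu0.le))]
    _ = K * LinearMap.det ((Dab a b z : ℂ →L[ℝ] ℂ) : ℂ →ₗ[ℝ] ℂ) := by rw [hdet]

/-- existence part of Theorem 7: For `0 < r < 1` and `r < s, t < 1/r`,
with `λ = (log t − log r)/(log s − log r)`, `μ = (log t + log r)/(log s + log r)` and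
`K = max{λ, 1/λ, μ, 1/μ}`, there is a homeomorphism `f` of the closed annulus
`{r ≤ |z| ≤ 1/r}` onto itself which is the identity on the boundary circles, takes
the circle `{|z| = s}` to the circle `{|z| = t}`, is real-differentiable at every
point of the open annulus off the circle `{|z| = s}`, and satisfies the distortion
inequality `‖Df(z)‖² ≤ K·J(z,f)` at every such point. -/
theorem stmt_2 (r s t : ℝ) (hr0 : 0 < r) (hr1 : r < 1)
    (hs : r < s) (hs' : s < 1 / r) (ht : r < t) (ht' : t < 1 / r)
    (lam mu K : ℝ)
    (hlam : lam = (Real.log t - Real.log r) / (Real.log s - Real.log r))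
    (hmu : mu = (Real.log t + Real.log r) / (Real.log s + Real.log r))
    (hK : K = max (max lam (1 / lam)) (max mu (1 / mu))) :
    ∃ f g : ℂ → ℂ,
      Set.BijOn f {z : ℂ | r ≤ ‖z‖ ∧ ‖z‖ ≤ 1 / r}
        {z : ℂ | r ≤ ‖z‖ ∧ ‖z‖ ≤ 1 / r} ∧
      ContinuousOn f {z : ℂ | r ≤ ‖z‖ ∧ ‖z‖ ≤ 1 / r} ∧
      ContinuousOn g {z : ℂ | r ≤ ‖z‖ ∧ ‖z‖ ≤ 1 / r} ∧
      Set.InvOn g f {z : ℂ | r ≤ ‖z‖ ∧ ‖z‖ ≤ 1 / r}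
        {z : ℂ | r ≤ ‖z‖ ∧ ‖z‖ ≤ 1 / r} ∧
      (∀ z : ℂ, ‖z‖ = r ∨ ‖z‖ = 1 / r → f z = z) ∧
      (∀ z : ℂ, ‖z‖ = s → ‖f z‖ = t) ∧
      (∀ z : ℂ, r < ‖z‖ → ‖z‖ < 1 / r → ‖z‖ ≠ s →
        ∃ D : ℂ →L[ℝ] ℂ, HasFDerivAt f D z ∧
          ‖D‖ ^ 2 ≤ K * LinearMap.det (D : ℂ →ₗ[ℝ] ℂ)) := by
  have hs0 : 0 < s := hr0.trans hs
  have ht0 : 0 < t := hr0.trans ht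
  have h1r0 : 0 < 1/r := by positivity
  have hlr : Real.log r < Real.log s := Real.log_lt_log hr0 hs
  have hlt : Real.log r < Real.log t := Real.log_lt_log hr0 ht
  have hlts : Real.log t < -Real.log r := by
    have := Real.log_lt_log ht0 ht'
    rwa [one_div, Real.log_inv] at this
  have hlss : Real.log s < -Real.log r := by
    have := Real.log_lt_log hs0 hs'
    rwa [one_div, Real.log_inv] at this
  have hne1 : Real.log s - Real.log r ≠ 0 := ne_of_gt (by linarith)
  have hne2 : Real.log s + Real.log r ≠ 0 := ne_of_lt (by linarith)
  have hlam0 : 0 < lam := by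
    rw [hlam]; exact div_pos (by linarith) (by linarith)
  have hmu0 : 0 < mu := by
    rw [hmu]; exact div_pos_of_neg_of_neg (by linarith) (by linarith)
  have hlamne : lam ≠ 0 := hlam0.ne'
  have hmune : mu ≠ 0 := hmu0.ne'
  have hlogt1 : Real.log t = (1 - lam) * Real.log r + lam * Real.log s := by
    rw [hlam]; field_simp; ring
  have hlogt2 : Real.log t = (mu - 1) * Real.log r + mu * Real.log s := by
    rw [hmu]; field_simp; ring
  set c1 := r ^ (1 - lam) with hc1def
  set c2 := r ^ (mu - 1) with hc2def
  have hc1 : 0 < c1 := Real.rpow_pos_of_pos hr0 _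
  have hc2 : 0 < c2 := Real.rpow_pos_of_pos hr0 _
  have hc1s : c1 * s ^ lam = t := by
    rw [hc1def, Real.rpow_def_of_pos hr0, Real.rpow_def_of_pos hs0, ← Real.exp_add,
      ← Real.exp_log ht0]
    congr 1
    linarith [hlogt1]
  have hc1r : c1 * r ^ lam = r := by
    rw [hc1def, ← Real.rpow_add hr0, show (1 - lam) + lam = 1 by ring, Real.rpow_one]
  have hc2s : c2 * s ^ mu = t := by
    rw [hc2def, Real.rpow_def_of_pos hr0, Real.rpow_def_of_pos hs0, ← Real.exp_add,
      ← Real.exp_log ht0]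
    congr 1
    linarith [hlogt2]
  have hc2r : c2 * (1/r) ^ mu = 1/r := by
    rw [hc2def, one_div, Real.inv_rpow hr0.le, ← Real.rpow_neg hr0.le, ← Real.rpow_add hr0,
      show (mu - 1) + -mu = -1 by ring, Real.rpow_neg_one]
  set d1 := c1 ^ (-(1/lam)) with hd1def
  set d2 := c2 ^ (-(1/mu)) with hd2def
  have hd1 : 0 < d1 := Real.rpow_pos_of_pos hc1 _
  have hd2 : 0 < d2 := Real.rpow_pos_of_pos hc2 _
  have hd1t : d1 * t ^ (1/lam) = s := by
    rw [hd1def, ← hc1s]; exact inv_scalar c1 lam s hc1 hs0 hlamne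
  have hd1r : d1 * r ^ (1/lam) = r := by
    rw [hd1def]
    nth_rewrite 1 [← hc1r]
    exact inv_scalar c1 lam r hc1 hr0 hlamne
  have hd2t : d2 * t ^ (1/mu) = s := by
    rw [hd2def, ← hc2s]; exact inv_scalar c2 mu s hc2 hs0 hmune
  have hd2r : d2 * (1/r) ^ (1/mu) = 1/r := by
    rw [hd2def]
    nth_rewrite 1 [← hc2r]
    exact inv_scalar c2 mu (1/r) hc2 h1r0 hmune
  have hglue : c1 * s ^ (lam - 1) = c2 * s ^ (mu - 1) := by
    have e1 : c1 * s ^ (lam - 1) * s = t := by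
      rw [mul_assoc, ← Real.rpow_add_one hs0.ne']
      simpa using hc1s
    have e2 : c2 * s ^ (mu - 1) * s = t := by
      rw [mul_assoc, ← Real.rpow_add_one hs0.ne']
      simpa using hc2s
    exact mul_right_cancel₀ hs0.ne' (e1.trans e2.symm)
  have hbr : c1 * r ^ (lam - 1) = 1 := by
    apply mul_right_cancel₀ hr0.ne'
    rw [mul_assoc, ← Real.rpow_add_one hr0.ne', one_mul]
    simpa using hc1r
  have hbr2 : c2 * (1/r) ^ (mu - 1) = 1 := by
    apply mul_right_cancel₀ h1r0.ne'
    rw [mul_assoc, ← Real.rpow_add_one h1r0.ne', one_mul]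
    simpa using hc2r
  set A := {z : ℂ | r ≤ ‖z‖ ∧ ‖z‖ ≤ 1/r} with hA
  set f : ℂ → ℂ := fun z => if ‖z‖ ≤ s then Fm c1 lam z else Fm c2 mu z with hfdef
  set g : ℂ → ℂ := fun z => if ‖z‖ ≤ t then Fm d1 (1/lam) z else Fm d2 (1/mu) z
    with hgdef
  have hfval : ∀ z : ℂ, f z = if ‖z‖ ≤ s then Fm c1 lam z else Fm c2 mu z :=
    fun z => rfl
  have hgval : ∀ z : ℂ, g z = if ‖z‖ ≤ t then Fm d1 (1/lam) z else Fm d2 (1/mu) z :=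
    fun z => rfl
  have hzA : ∀ z : ℂ, z ∈ A → z ≠ 0 := by
    intro z hz h0
    obtain ⟨h1, h2⟩ := hz
    rw [h0] at h1
    simp at h1
    linarith
  have habsf1 : ∀ z : ℂ, z ≠ 0 → ‖z‖ ≤ s →
      ‖f z‖ = c1 * ‖z‖ ^ lam := by
    intro z hz h
    rw [hfval, if_pos h, Fm_abs c1 lam hc1.le z hz]
  have habsf2 : ∀ z : ℂ, z ≠ 0 → ¬ ‖z‖ ≤ s →
      ‖f z‖ = c2 * ‖z‖ ^ mu := by
    intro z hz h
    rw [hfval, if_neg h, Fm_abs c2 mu hc2.le z hz]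
  have habsg1 : ∀ z : ℂ, z ≠ 0 → ‖z‖ ≤ t →
      ‖g z‖ = d1 * ‖z‖ ^ (1/lam) := by
    intro z hz h
    rw [hgval, if_pos h, Fm_abs d1 (1/lam) hd1.le z hz]
  have habsg2 : ∀ z : ℂ, z ≠ 0 → ¬ ‖z‖ ≤ t →
      ‖g z‖ = d2 * ‖z‖ ^ (1/mu) := by
    intro z hz h
    rw [hgval, if_neg h, Fm_abs d2 (1/mu) hd2.le z hz]
  have hmono : ∀ (c α x y : ℝ), 0 < c → 0 < α → 0 ≤ x → x ≤ y → c * x ^ α ≤ c * y ^ α :=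
    fun c α x y hc hα hx hxy => mul_le_mul_of_nonneg_left (Real.rpow_le_rpow hx hxy hα.le) hc.le
  have hsmono : ∀ (c α x y : ℝ), 0 < c → 0 < α → 0 ≤ x → x < y → c * x ^ α < c * y ^ α :=
    fun c α x y hc hα hx hxy => mul_lt_mul_of_pos_left (Real.rpow_lt_rpow hx hxy hα) hc
  have hlaminv0 : 0 < 1/lam := one_div_pos.mpr hlam0
  have hmuinv0 : 0 < 1/mu := one_div_pos.mpr hmu0
  have hmapf : Set.MapsTo f A A := by
    intro z hz
    have hz0 := hzA z hz
    obtain ⟨h1, h2⟩ := hz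
    by_cases hb : ‖z‖ ≤ s
    · refine ⟨?_, ?_⟩
      · rw [habsf1 z hz0 hb]
        calc r = c1 * r ^ lam := hc1r.symm
          _ ≤ c1 * ‖z‖ ^ lam := hmono _ _ _ _ hc1 hlam0 hr0.le h1
      · rw [habsf1 z hz0 hb]
        calc c1 * ‖z‖ ^ lam ≤ c1 * s ^ lam :=
              hmono _ _ _ _ hc1 hlam0 (norm_nonneg z) hb
          _ = t := hc1s
          _ ≤ 1/r := ht'.le
    · push_neg at hb
      refine ⟨?_, ?_⟩
      · rw [habsf2 z hz0 (not_le.mpr hb)]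
        have h3 : t < c2 * ‖z‖ ^ mu := by
          rw [← hc2s]; exact hsmono _ _ _ _ hc2 hmu0 hs0.le hb
        linarith
      · rw [habsf2 z hz0 (not_le.mpr hb)]
        calc c2 * ‖z‖ ^ mu ≤ c2 * (1/r) ^ mu :=
              hmono _ _ _ _ hc2 hmu0 (norm_nonneg z) h2
          _ = 1/r := hc2r
  have hmapg : Set.MapsTo g A A := by
    intro z hz
    have hz0 := hzA z hz
    obtain ⟨h1, h2⟩ := hz
    by_cases hb : ‖z‖ ≤ t
    · refine ⟨?_, ?_⟩
      · rw [habsg1 z hz0 hb]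
        calc r = d1 * r ^ (1/lam) := hd1r.symm
          _ ≤ d1 * ‖z‖ ^ (1/lam) := hmono _ _ _ _ hd1 hlaminv0 hr0.le h1
      · rw [habsg1 z hz0 hb]
        calc d1 * ‖z‖ ^ (1/lam) ≤ d1 * t ^ (1/lam) :=
              hmono _ _ _ _ hd1 hlaminv0 (norm_nonneg z) hb
          _ = s := hd1t
          _ ≤ 1/r := hs'.le
    · push_neg at hb
      refine ⟨?_, ?_⟩
      · rw [habsg2 z hz0 (not_le.mpr hb)]
        have h3 : s < d2 * ‖z‖ ^ (1/mu) := by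
          rw [← hd2t]; exact hsmono _ _ _ _ hd2 hmuinv0 ht0.le hb
        linarith
      · rw [habsg2 z hz0 (not_le.mpr hb)]
        calc d2 * ‖z‖ ^ (1/mu) ≤ d2 * (1/r) ^ (1/mu) :=
              hmono _ _ _ _ hd2 hmuinv0 (norm_nonneg z) h2
          _ = 1/r := hd2r
  have hinv1 : ∀ z ∈ A, g (f z) = z := by
    intro z hz
    have hz0 := hzA z hz
    by_cases hb : ‖z‖ ≤ s
    · have hfz : ‖f z‖ ≤ t := by
        rw [habsf1 z hz0 hb, ← hc1s]
        exact hmono _ _ _ _ hc1 hlam0 (norm_nonneg z) hb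
      rw [hgval, if_pos hfz, hfval, if_pos hb, hd1def]
      exact Fm_inv_left c1 lam hc1 hlamne z hz0
    · push_neg at hb
      have hfz : ¬ ‖f z‖ ≤ t := by
        rw [habsf2 z hz0 (not_le.mpr hb)]
        push_neg
        rw [← hc2s]
        exact hsmono _ _ _ _ hc2 hmu0 hs0.le hb
      rw [hgval, if_neg hfz, hfval, if_neg (not_le.mpr hb), hd2def]
      exact Fm_inv_left c2 mu hc2 hmune z hz0
  have hinv2 : ∀ z ∈ A, f (g z) = z := by
    intro z hz
    have hz0 := hzA z hz
    by_cases hb : ‖z‖ ≤ t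
    · have hgz : ‖g z‖ ≤ s := by
        rw [habsg1 z hz0 hb, ← hd1t]
        exact hmono _ _ _ _ hd1 hlaminv0 (norm_nonneg z) hb
      rw [hfval, if_pos hgz, hgval, if_pos hb, hd1def]
      exact Fm_inv_right c1 lam hc1 hlamne z hz0
    · push_neg at hb
      have hgz : ¬ ‖g z‖ ≤ s := by
        rw [habsg2 z hz0 (not_le.mpr hb)]
        push_neg
        rw [← hd2t]
        exact hsmono _ _ _ _ hd2 hmuinv0 ht0.le hb
      rw [hfval, if_neg hgz, hgval, if_neg (not_le.mpr hb), hd2def]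
      exact Fm_inv_right c2 mu hc2 hmune z hz0
  have hinvOn : Set.InvOn g f A A := ⟨hinv1, hinv2⟩
  have hcontf : ContinuousOn f A := by
    rw [hfdef]
    apply ContinuousOn.if
    · intro a ha
      have hfr : ‖a‖ = s :=
        frontier_le_subset_eq continuous_norm continuous_const ha.2
      show Fm c1 lam a = Fm c2 mu a
      unfold Fm
      rw [hfr, hglue]
    · exact (Fm_contOn c1 lam).mono (fun z hz => hzA z hz.1)
    · exact (Fm_contOn c2 mu).mono (fun z hz => hzA z hz.1)
  have hcontg : ContinuousOn g A := by
    rw [hgdef]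
    apply ContinuousOn.if
    · intro a ha
      have hfr : ‖a‖ = t :=
        frontier_le_subset_eq continuous_norm continuous_const ha.2
      have e1 : d1 * t ^ (1/lam - 1) = d2 * t ^ (1/mu - 1) := by
        have f1 : d1 * t ^ (1/lam - 1) * t = s := by
          rw [mul_assoc, ← Real.rpow_add_one ht0.ne']
          simpa using hd1t
        have f2 : d2 * t ^ (1/mu - 1) * t = s := by
          rw [mul_assoc, ← Real.rpow_add_one ht0.ne']
          simpa using hd2t
        exact mul_right_cancel₀ ht0.ne' (f1.trans f2.symm)
      show Fm d1 (1/lam) a = Fm d2 (1/mu) a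
      unfold Fm
      rw [hfr, e1]
    · exact (Fm_contOn d1 (1/lam)).mono (fun z hz => hzA z hz.1)
    · exact (Fm_contOn d2 (1/mu)).mono (fun z hz => hzA z hz.1)
  refine ⟨f, g, hinvOn.bijOn hmapf hmapg, hcontf, hcontg, hinvOn, ?_, ?_, ?_⟩
  · intro z hcase
    rcases hcase with h | h
    · have hz0 : z ≠ 0 := by
        intro h0; rw [h0] at h; simp at h; linarith
      rw [hfval, if_pos (by rw [h]; exact hs.le)]
      show (c1 * ‖z‖ ^ (lam - 1)) • z = z
      rw [h, hbr, one_smul]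
    · have hz0 : z ≠ 0 := by
        intro h0; rw [h0] at h; simp at h; linarith
      rw [hfval, if_neg (by rw [h]; exact not_le.mpr hs')]
      show (c2 * ‖z‖ ^ (mu - 1)) • z = z
      rw [h, hbr2, one_smul]
  · intro z h
    have hz0 : z ≠ 0 := by
      intro h0; rw [h0] at h; simp at h; linarith
    rw [habsf1 z hz0 (le_of_eq h), h, hc1s]
  · intro z hlow hhigh hne
    have hz0 : z ≠ 0 := by
      intro h0; rw [h0] at hlow; simp at hlow; linarith
    rcases lt_or_gt_of_ne hne with hb | hb
    · obtain ⟨D, hD, hDb⟩ := Fm_deriv_bound c1 lam K hc1 hlam0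
        (by rw [hK]; exact le_max_left _ _) z hz0
      refine ⟨D, ?_, hDb⟩
      apply hD.congr_of_eventuallyEq
      filter_upwards [IsOpen.mem_nhds
        (isOpen_lt continuous_norm continuous_const) hb] with w hw
      rw [hfval, if_pos (le_of_lt hw)]
    · obtain ⟨D, hD, hDb⟩ := Fm_deriv_bound c2 mu K hc2 hmu0
        (by rw [hK]; exact le_max_right _ _) z hz0
      refine ⟨D, ?_, hDb⟩
      apply hD.congr_of_eventuallyEq
      filter_upwards [IsOpen.mem_nhds
        (isOpen_lt continuous_const continuous_norm) hb] with w hw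
      rw [hfval, if_neg (not_le.mpr hw)]
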